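/- The map s₁ : (ℕ → ℕ) → Opens(ℕ → ℕ) defined by s₁(f) = ⋃ {n : f n ≠ 0} {g ∈ ℕ → ℕ : g 0 = n and g (f n) = n} is continuous from the Baire space to Opens(ℕ → ℕ) with the Scott topology (each set {g : g 0 = n ∧ g (f n) = n} is open, so s₁(f) is indeed an open set). -/

import Mathlib

open Topology TopologicalSpace

def s₁ (f : ℕ → ℕ) : Opens (ℕ → ℕ) :=
  ⟨⋃ n ∈ {n : ℕ | f n ≠ 0}, {g : ℕ → ℕ | g 0 = n ∧ g (f n) = n}, by
    refine isOpen_biUnion fun n _ => ?_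
    have : {g : ℕ → ℕ | g 0 = n ∧ g (f n) = n}
        = (fun g : ℕ → ℕ => g 0) ⁻¹' {n} ∩ (fun g : ℕ → ℕ => g (f n)) ⁻¹' {n} := by
      ext g; simp [Set.mem_setOf_eq]
    rw [this]
    exact ((isOpen_discrete ({n} : Set ℕ)).preimage (continuous_apply 0)).inter
      ((isOpen_discrete ({n} : Set ℕ)).preimage (continuous_apply (f n)))⟩

/-- The basic open set `{g | g 0 = n ∧ g m = n}`. -/
def basic (n m : ℕ) : Opens (ℕ → ℕ) :=
  ⟨{g : ℕ → ℕ | g 0 = n ∧ g m = n}, by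
    have : {g : ℕ → ℕ | g 0 = n ∧ g m = n}
        = (fun g : ℕ → ℕ => g 0) ⁻¹' {n} ∩ (fun g : ℕ → ℕ => g m) ⁻¹' {n} := by
      ext g; simp [Set.mem_setOf_eq]
    rw [this]
    exact ((isOpen_discrete ({n} : Set ℕ)).preimage (continuous_apply 0)).inter
      ((isOpen_discrete ({n} : Set ℕ)).preimage (continuous_apply m))⟩

/-- Finite approximations to `s₁ f`. -/
def approx (f : ℕ → ℕ) (F : Finset ℕ) : Opens (ℕ → ℕ) :=
  ⨆ n ∈ (F : Set ℕ) ∩ {n | f n ≠ 0}, basic n (f n)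

lemma approx_mono (f : ℕ → ℕ) : Monotone (approx f) := by
  intro F G hFG
  exact biSup_mono (fun n hn => ⟨hFG hn.1, hn.2⟩)

lemma approx_le (f : ℕ → ℕ) (F : Finset ℕ) : approx f F ≤ s₁ f := by
  refine iSup₂_le fun n hn => ?_
  intro g hg
  exact Set.mem_biUnion hn.2 hg

lemma iSup_approx (f : ℕ → ℕ) : ⨆ F : Finset ℕ, approx f F = s₁ f := by
  apply le_antisymm
  · exact iSup_le fun F => approx_le f F
  · intro g hg
    simp only [s₁, Opens.mem_mk, Set.mem_iUnion] at hg
    obtain ⟨n, hn, hgn⟩ := hg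
    refine (le_iSup (approx f) ({n} : Finset ℕ)) ?_
    show g ∈ approx f {n}
    simp only [approx, Opens.mem_iSup]
    exact ⟨n, ⟨Finset.mem_coe.mpr (Finset.mem_singleton_self n), hn⟩, hgn⟩

theorem stmt7 :
    Continuous fun f : ℕ → ℕ => Topology.WithScott.toScott (s₁ f) := by
  rw [continuous_def]
  intro W hW
  obtain ⟨hup, hinacc⟩ :=
    (Topology.IsScott.isOpen_iff_isUpperSet_and_dirSupInaccOn (D := Set.univ)).mp hW
  rw [isOpen_iff_forall_mem_open]
  intro f hf
  -- the range of approx f is directed with lub s₁ f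
  have hdir : DirectedOn (· ≤ ·) (Set.range (approx f)) :=
    ((approx_mono f).directed_le).directedOn_range
  have hlub : IsLUB (Set.range (approx f)) (s₁ f) := by
    rw [← iSup_approx f]; exact isLUB_iSup
  obtain ⟨U, ⟨F, rfl⟩, hUW⟩ := hinacc (Set.mem_univ _) ⟨approx f ∅, Set.mem_range_self _⟩
    hdir hlub hf
  refine ⟨{f' : ℕ → ℕ | ∀ n ∈ F, f' n = f n}, ?_, ?_, ?_⟩
  · intro f' hf'
    have hset : (F : Set ℕ) ∩ {n | f' n ≠ 0} = (F : Set ℕ) ∩ {n | f n ≠ 0} := by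
      ext n
      simp only [Set.mem_inter_iff, Set.mem_setOf_eq]
      constructor
      · rintro ⟨h1, h2⟩; exact ⟨h1, by rwa [hf' n h1] at h2⟩
      · rintro ⟨h1, h2⟩; exact ⟨h1, by rwa [hf' n h1]⟩
    have hEq : approx f' F = approx f F := by
      unfold approx
      rw [hset]
      exact biSup_congr fun n hn => by rw [hf' n hn.1]
    have : approx f F ≤ s₁ f' := hEq ▸ approx_le f' F
    exact hup this hUW
  · have : {f' : ℕ → ℕ | ∀ n ∈ F, f' n = f n}
        = ⋂ n ∈ F, (fun f' : ℕ → ℕ => f' n) ⁻¹' {f n} := by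
      ext f'; simp [Set.mem_setOf_eq]
    rw [this]
    exact isOpen_biInter_finset fun n _ =>
      (isOpen_discrete _).preimage (continuous_apply n)
  · exact fun n _ => rfl
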